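/- Let G be a finite simple graph, f : V(G) → ℤ⁺ a function, S a nonempty subset of V(G), and F a spanning subgraph of G such that every vertex v outside S has odd degree in F. Then the number of odd components of G - S is at most the number of edges of F joining S to V(G) \ S, which is at most the sum over v in S of deg_F(v). In particular, if deg_F(v) ≤ f(v) for all v ∈ S, then o(G - S) ≤ Σ_{v∈S} f(v). -/
import Mathlib


open SimpleGraph

/-- Degree of `v` in graph `F` (no decidability assumptions). -/
noncomputable def fdeg {V : Type*} (F : SimpleGraph V) (v : V) : ℕ :=
  Nat.card (F.neighborSet v)

/-- Number of odd components of `G - S`. -/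
noncomputable def oddComp {V : Type*} [Fintype V] (G : SimpleGraph V) (S : Set V) : ℕ :=
  Nat.card {c : (G.induce (Sᶜ : Set V)).ConnectedComponent // Odd (Nat.card c.supp)}

/-- The set `J_f(v)`: odd numbers at most `f v`, together with `f v` itself. -/
def Jf {V : Type*} (f : V → ℕ) (v : V) : Set ℕ := {m | Odd m ∧ m ≤ f v} ∪ {f v}

/-- The set `J_f⁺(v)`: odd numbers at most `f v + 1`. -/
def Jfp {V : Type*} (f : V → ℕ) (v : V) : Set ℕ := {m | Odd m ∧ m ≤ f v + 1}

lemma fdeg_eq_degree {V : Type*} [Fintype V] (F : SimpleGraph V) [DecidableRel F.Adj]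
    (v : V) : fdeg F v = F.degree v := by
  rw [fdeg, Nat.card_eq_fintype_card, SimpleGraph.card_neighborSet_eq_degree]

/-- Every odd component of `G - S` sends an `F`-edge into `S`. -/
lemma exists_cross_edge {V : Type*} [Fintype V] (G F : SimpleGraph V) (hFG : F ≤ G)
    (S : Finset V) (hdeg : ∀ v : V, v ∉ S → Odd (fdeg F v))
    (c : (G.induce ((↑S : Set V)ᶜ)).ConnectedComponent) (hc : Odd (Nat.card c.supp)) :
    ∃ w v, F.Adj w v ∧ v ∈ S ∧ ∃ h : w ∈ ((↑S : Set V)ᶜ),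
      (G.induce ((↑S : Set V)ᶜ)).connectedComponentMk ⟨w, h⟩ = c := by
  classical
  set T : Finset V := c.supp.toFinset.image Subtype.val with hT
  have hTmem : ∀ v : V, v ∈ T ↔ ∃ h : v ∈ ((↑S : Set V)ᶜ), (G.induce ((↑S : Set V)ᶜ)).connectedComponentMk ⟨v, h⟩ = c := by
    intro v
    simp only [hT, Finset.mem_image, Set.mem_toFinset, Subtype.exists,
      ConnectedComponent.mem_supp_iff]
    constructor
    · rintro ⟨a, ha, hmk, rfl⟩; exact ⟨ha, hmk⟩
    · rintro ⟨h, hmk⟩; exact ⟨v, h, hmk, rfl⟩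
  have hTS : ∀ v ∈ T, v ∉ S := by
    intro v hv
    obtain ⟨h, -⟩ := (hTmem v).1 hv
    simpa using h
  have hcard : T.card = Nat.card c.supp := by
    rw [hT, Finset.card_image_of_injective _ Subtype.val_injective,
      Set.toFinset_card, Nat.card_eq_fintype_card]
  -- auxiliary graph of F-edges inside T
  set H : SimpleGraph V := SimpleGraph.fromRel (fun a b => a ∈ T ∧ b ∈ T ∧ F.Adj a b) with hH
  have hHadj : ∀ a b, H.Adj a b ↔ a ∈ T ∧ b ∈ T ∧ F.Adj a b := by
    intro a b
    rw [hH, fromRel_adj]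
    constructor
    · rintro ⟨hne, h | h⟩
      · exact h
      · exact ⟨h.2.1, h.1, h.2.2.symm⟩
    · rintro ⟨ha, hb, hadj⟩
      exact ⟨hadj.ne, Or.inl ⟨ha, hb, hadj⟩⟩
  have hHdeg : ∀ v ∈ T, H.degree v = (F.neighborFinset v ∩ T).card := by
    intro v hv
    rw [SimpleGraph.degree]
    congr 1
    ext w
    simp [SimpleGraph.mem_neighborFinset, hHadj, hv, and_comm]
  have hHdeg0 : ∀ v, v ∉ T → H.degree v = 0 := by
    intro v hv
    rw [SimpleGraph.degree, Finset.card_eq_zero]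
    ext w
    simp [SimpleGraph.mem_neighborFinset, hHadj, hv]
  have heven : Even (∑ v ∈ T, (F.neighborFinset v ∩ T).card) := by
    have h1 : ∑ v : V, H.degree v = 2 * H.edgeFinset.card :=
      SimpleGraph.sum_degrees_eq_twice_card_edges H
    have h2 : ∑ v : V, H.degree v = ∑ v ∈ T, H.degree v := by
      rw [← Finset.sum_subset (Finset.subset_univ T)]
      intro x _ hx
      exact hHdeg0 x hx
    have h3 : ∑ v ∈ T, H.degree v = ∑ v ∈ T, (F.neighborFinset v ∩ T).card :=
      Finset.sum_congr rfl hHdeg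
    rw [← h3, ← h2, h1]
    exact ⟨H.edgeFinset.card, by ring⟩
  have hodd : Odd (∑ v ∈ T, F.degree v) := by
    rw [Nat.odd_iff, Finset.sum_nat_mod]
    have : ∑ v ∈ T, F.degree v % 2 = ∑ v ∈ T, 1 := by
      refine Finset.sum_congr rfl ?_
      intro v hv
      have := hdeg v (hTS v hv)
      rw [fdeg_eq_degree] at this
      exact Nat.odd_iff.1 this
    rw [this, Finset.sum_const, smul_eq_mul, mul_one]
    have : Odd T.card := hcard ▸ hc
    exact Nat.odd_iff.1 this
  have hsplit : ∑ v ∈ T, F.degree v =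
      ∑ v ∈ T, (F.neighborFinset v ∩ T).card + ∑ v ∈ T, (F.neighborFinset v \ T).card := by
    rw [← Finset.sum_add_distrib]
    refine Finset.sum_congr rfl ?_
    intro v _
    rw [SimpleGraph.degree]
    exact (Finset.card_inter_add_card_sdiff _ _).symm
  have hcross : Odd (∑ v ∈ T, (F.neighborFinset v \ T).card) := by
    rw [hsplit, Nat.odd_add] at hodd
    have h1 : ¬ Odd (∑ v ∈ T, (F.neighborFinset v ∩ T).card) := Nat.not_odd_iff_even.2 heven
    have h2 : ¬ Even (∑ v ∈ T, (F.neighborFinset v \ T).card) := fun h => h1 (hodd.2 h)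
    exact Nat.not_even_iff_odd.1 h2
  have hne : ∑ v ∈ T, (F.neighborFinset v \ T).card ≠ 0 := by
    intro h0
    rw [h0] at hcross
    simpa using hcross
  obtain ⟨v, hvT, hv0⟩ := Finset.exists_ne_zero_of_sum_ne_zero hne
  obtain ⟨w, hw⟩ := Finset.card_ne_zero.1 hv0 |>.exists_mem
  rw [Finset.mem_sdiff, SimpleGraph.mem_neighborFinset] at hw
  obtain ⟨hadj, hwT⟩ := hw
  obtain ⟨hvSc, hvmk⟩ := (hTmem v).1 hvT
  have hwS : w ∈ S := by
    by_contra hwS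
    have hwSc : w ∈ ((↑S : Set V)ᶜ) := by simpa using hwS
    have hadj' : (G.induce ((↑S : Set V)ᶜ)).Adj ⟨v, hvSc⟩ ⟨w, hwSc⟩ := by
      simpa [SimpleGraph.comap_adj] using hFG hadj
    have : (G.induce ((↑S : Set V)ᶜ)).connectedComponentMk ⟨w, hwSc⟩ = c := by
      rw [← hvmk]
      exact ConnectedComponent.sound hadj'.symm.reachable
    exact hwT ((hTmem w).2 ⟨hwSc, this⟩)
  exact ⟨v, w, hadj, hwS, hvSc, hvmk⟩


theorem odd_components_bound {V : Type*} [Fintype V] (G F : SimpleGraph V)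
    (hFG : F ≤ G) (f : V → ℕ) (hf : ∀ v, 0 < f v)
    (S : Finset V) (hS : S.Nonempty)
    (hdeg : ∀ v : V, v ∉ S → Odd (fdeg F v)) :
    oddComp G ↑S ≤
        Nat.card {e : Sym2 V // e ∈ F.edgeSet ∧
          ∃ v w, e = s(v, w) ∧ v ∈ S ∧ w ∉ S} ∧
      Nat.card {e : Sym2 V // e ∈ F.edgeSet ∧
          ∃ v w, e = s(v, w) ∧ v ∈ S ∧ w ∉ S} ≤ ∑ v ∈ S, fdeg F v ∧
      ((∀ v ∈ S, fdeg F v ≤ f v) → oddComp G ↑S ≤ ∑ v ∈ S, f v) := by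
  classical
  set E := {e : Sym2 V // e ∈ F.edgeSet ∧ ∃ v w, e = s(v, w) ∧ v ∈ S ∧ w ∉ S} with hE
  -- Part 1
  have part1 : oddComp G ↑S ≤ Nat.card E := by
    rw [oddComp]
    have hmap : ∀ cp : {c : (G.induce (((↑S : Set V))ᶜ : Set V)).ConnectedComponent //
        Odd (Nat.card c.supp)},
        ∃ e : E, ∃ w v, (e : Sym2 V) = s(v, w) ∧ v ∈ S ∧ ∃ h : w ∈ ((↑S : Set V)ᶜ),
          (G.induce ((↑S : Set V)ᶜ)).connectedComponentMk ⟨w, h⟩ = cp.1 := by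
      rintro ⟨c, hc⟩
      obtain ⟨w, v, hadj, hvS, hw, hmk⟩ := exists_cross_edge G F hFG S hdeg c hc
      have hwS : w ∉ S := by simpa using hw
      refine ⟨⟨s(v, w), ?_, v, w, rfl, hvS, hwS⟩, w, v, rfl, hvS, hw, hmk⟩
      rw [SimpleGraph.mem_edgeSet]
      exact hadj.symm
    choose Φ w v heq hvS hwSc hmk using hmap
    have hinj : Function.Injective Φ := by
      intro c1 c2 h
      have h2 : s(v c1, w c1) = s(v c2, w c2) := by
        rw [← heq c1, ← heq c2, h]
      rw [Sym2.eq_iff] at h2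
      rcases h2 with ⟨hv, hw⟩ | ⟨hv, hw⟩
      · apply Subtype.ext
        rw [← hmk c1, ← hmk c2]
        congr 1
        exact Subtype.ext hw
      · exfalso
        have := hwSc c2
        rw [← hv] at this
        simp [hvS c1] at this
    exact Nat.card_le_card_of_injective Φ hinj
  have part2 : Nat.card E ≤ ∑ v ∈ S, fdeg F v := by
    have hmap2 : ∀ e : E, ∃ p : Σ v : ↥S, ↥(F.neighborSet (↑v : V)),
        (e : Sym2 V) = s((↑p.1 : V), (↑p.2 : V)) := by
      rintro ⟨e, he, v, w, rfl, hvS, hwS⟩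
      have hadj : F.Adj v w := F.mem_edgeSet.1 he
      exact ⟨⟨⟨v, hvS⟩, ⟨w, hadj⟩⟩, rfl⟩
    choose Ψ hΨ using hmap2
    have hinj2 : Function.Injective Ψ := by
      intro e1 e2 h
      apply Subtype.ext
      rw [hΨ e1, hΨ e2, h]
    calc Nat.card E ≤ Nat.card (Σ v : ↥S, ↥(F.neighborSet (↑v : V))) :=
          Nat.card_le_card_of_injective Ψ hinj2
      _ = ∑ v ∈ S, fdeg F v := by
          rw [Nat.card_eq_fintype_card, Fintype.card_sigma]
          rw [← Finset.sum_coe_sort S (fun v => fdeg F v)]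
          refine Finset.sum_congr rfl ?_
          intro x _
          rw [fdeg, Nat.card_eq_fintype_card]
  refine ⟨part1, part2, ?_⟩
  intro hle
  calc oddComp G ↑S ≤ Nat.card E := part1
    _ ≤ ∑ v ∈ S, fdeg F v := part2
    _ ≤ ∑ v ∈ S, f v := Finset.sum_le_sum hle
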